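/- Let V, W, U, V', W', U' be m-dimensional subspaces of ℂ^n. Suppose there are principal bases for each pair within each triple such that all pairwise principal angles agree (θ_i(V,W) = θ_i(V',W') etc.) and all principal-unitary matrix entries agree: ⟨v_i^W, v_k^U⟩ = ⟨v'_i^{W'}, v'_k^{U'}⟩, ⟨w_i^V, w_k^U⟩ = ⟨w'_i^{V'}, w'_k^{U'}⟩, ⟨u_k^V, u_j^W⟩ = ⟨u'_k^{V'}, u'_j^{W'}⟩. Then there exists a unitary U_0 on ℂ^n mapping V, W, U onto V', W', U' respectively. -/

import Mathlib

open Finset in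
/-- Two finite families in a finite-dimensional inner ℂ product space with equal Gram matrices
are related by a global linear isometry equivalence. -/
lemma exists_isometry_of_gram_eq {E : Type*} [NormedAddCommGroup E] [InnerProductSpace ℂ E]
    [FiniteDimensional ℂ E] {ι : Type*} [Fintype ι] [DecidableEq ι]
    (f g : ι → E) (h : ∀ i j, (inner ℂ (f i) (f j) : ℂ) = inner ℂ (g i) (g j)) :
    ∃ T : E ≃ₗᵢ[ℂ] E, ∀ i, T (f i) = g i := by
  classical
  set Tf : (ι → ℂ) →ₗ[ℂ] E := Fintype.linearCombination ℂ f with hTf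
  set Tg : (ι → ℂ) →ₗ[ℂ] E := Fintype.linearCombination ℂ g with hTg
  have hTfa : ∀ c, Tf c = ∑ i, c i • f i := fun c => by rw [hTf]; exact Fintype.linearCombination_apply ..
  have hTga : ∀ c, Tg c = ∑ i, c i • g i := fun c => by rw [hTg]; exact Fintype.linearCombination_apply ..
  have hgram : ∀ c d, (inner ℂ (Tf c) (Tf d) : ℂ) = inner ℂ (Tg c) (Tg d) := by
    intro c d
    rw [hTfa, hTfa, hTga, hTga]
    simp only [sum_inner, inner_sum, inner_smul_left, inner_smul_right]
    exact Finset.sum_congr rfl fun i _ => congrArg _ (Finset.sum_congr rfl fun j _ => by rw [h j i])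
  have hker : LinearMap.ker Tf = LinearMap.ker Tg := by
    ext c
    simp only [LinearMap.mem_ker]
    constructor <;> intro hc
    · have : (inner ℂ (Tg c) (Tg c) : ℂ) = 0 := by rw [← hgram, hc, inner_zero_right]
      exact inner_self_eq_zero.mp this
    · have : (inner ℂ (Tf c) (Tf c) : ℂ) = 0 := by rw [hgram, hc, inner_zero_right]
      exact inner_self_eq_zero.mp this
  set S : (LinearMap.range Tf : Submodule ℂ E) ≃ₗ[ℂ] (LinearMap.range Tg : Submodule ℂ E) :=
    Tf.quotKerEquivRange.symm.trans
      ((Submodule.quotEquivOfEq _ _ hker).trans Tg.quotKerEquivRange) with hS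
  have hSapp : ∀ c (hc : Tf c ∈ LinearMap.range Tf),
      (S ⟨Tf c, hc⟩ : E) = Tg c := by
    intro c hc
    have h1 : Tf.quotKerEquivRange.symm ⟨Tf c, hc⟩ = Submodule.Quotient.mk c := by
      rw [LinearEquiv.symm_apply_eq]
      exact Subtype.ext (Tf.quotKerEquivRange_apply_mk c)
    rw [hS]
    simp only [LinearEquiv.trans_apply, h1]
    have h2 : (Submodule.quotEquivOfEq _ _ hker) (Submodule.Quotient.mk c)
        = Submodule.Quotient.mk c := rfl
    rw [h2]
    exact Tg.quotKerEquivRange_apply_mk c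
  have hinner : ∀ x y : (LinearMap.range Tf : Submodule ℂ E),
      (inner ℂ (S x) (S y) : ℂ) = inner ℂ x y := by
    rintro ⟨x, c, rfl⟩ ⟨y, d, rfl⟩
    rw [Submodule.coe_inner, Submodule.coe_inner]
    exact (congrArg₂ (inner ℂ) (hSapp c _) (hSapp d _)).trans (hgram c d).symm
  set Si : (LinearMap.range Tf : Submodule ℂ E) →ₗᵢ[ℂ] E :=
    (Submodule.subtypeₗᵢ (LinearMap.range Tg)).comp (S.isometryOfInner hinner).toLinearIsometry
      with hSi
  have hSiapp : ∀ x, Si x = (S x : E) := fun x => rfl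
  refine ⟨Si.extend.toLinearIsometryEquiv rfl, fun i => ?_⟩
  have hfi : f i = Tf (Pi.single i 1) := by
    rw [hTfa]
    simp [Pi.single_apply, ite_smul]
  have hmem : f i ∈ LinearMap.range Tf := ⟨Pi.single i 1, hfi.symm⟩
  have : Si.extend.toLinearIsometryEquiv rfl (f i) = Si.extend (f i) := rfl
  rw [this]
  have := Si.extend_apply ⟨f i, hmem⟩
  rw [show ((⟨f i, hmem⟩ : LinearMap.range Tf) : E) = f i from rfl] at this
  rw [this, hSiapp]
  have : (⟨f i, hmem⟩ : LinearMap.range Tf) = ⟨Tf (Pi.single i 1), ⟨_, rfl⟩⟩ :=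
    Subtype.ext hfi
  rw [this]
  refine (hSapp _ _).trans ?_
  rw [hTga]
  simp [Pi.single_apply, ite_smul]

open Finset in
lemma expand_right_aux {E : Type*} [NormedAddCommGroup E] [InnerProductSpace ℂ E] {m : ℕ}
    {b : Fin m → E} (hb : Orthonormal ℂ b) {y : E}
    (hy : y ∈ Submodule.span ℂ (Set.range b)) (x : E) :
    (inner ℂ x y : ℂ) = ∑ k, (inner ℂ (b k) y : ℂ) * inner ℂ x (b k) := by
  induction hy using Submodule.span_induction with
  | mem z hz =>
    obtain ⟨j, rfl⟩ := hz
    simp [orthonormal_iff_ite.mp hb]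
  | zero => simp
  | add y z _ _ hy hz =>
    simp only [inner_add_right, hy, hz, add_mul, ← Finset.sum_add_distrib]
  | smul a y _ hy =>
    simp only [inner_smul_right, hy, Finset.mul_sum, mul_assoc]

lemma inner_swap_eq_aux {E : Type*} [NormedAddCommGroup E] [InnerProductSpace ℂ E]
    {x y x' y' : E} (h : (inner ℂ x y : ℂ) = inner ℂ x' y') :
    (inner ℂ y x : ℂ) = inner ℂ y' x' := by
  rw [← inner_conj_symm, h, inner_conj_symm]

lemma expand_left_aux {E : Type*} [NormedAddCommGroup E] [InnerProductSpace ℂ E] {m : ℕ}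
    {b : Fin m → E} (hb : Orthonormal ℂ b) {x : E}
    (hx : x ∈ Submodule.span ℂ (Set.range b)) (y : E) :
    (inner ℂ x y : ℂ) = ∑ k, (starRingEnd ℂ) (inner ℂ (b k) x) * inner ℂ (b k) y := by
  rw [← inner_conj_symm, expand_right_aux hb hx y, map_sum]
  refine Finset.sum_congr rfl fun k _ => ?_
  rw [map_mul]
  exact congrArg _ (inner_conj_symm _ _)

lemma mem_span_of_span_eq_aux {E : Type*} [NormedAddCommGroup E] [InnerProductSpace ℂ E]
    {m : ℕ} {a b : Fin m → E} {S : Submodule ℂ E}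
    (ha : Submodule.span ℂ (Set.range a) = S) (hb : Submodule.span ℂ (Set.range b) = S)
    (j : Fin m) : a j ∈ Submodule.span ℂ (Set.range b) := by
  rw [hb, ← ha]
  exact Submodule.subset_span ⟨j, rfl⟩

lemma step_r_aux {E : Type*} [NormedAddCommGroup E] [InnerProductSpace ℂ E] {m : ℕ}
    {b b' : Fin m → E} {x x' y y' : E} (hb : Orthonormal ℂ b) (hb' : Orthonormal ℂ b')
    (hy : y ∈ Submodule.span ℂ (Set.range b)) (hy' : y' ∈ Submodule.span ℂ (Set.range b'))
    (h1 : ∀ k, (inner ℂ (b k) y : ℂ) = inner ℂ (b' k) y')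
    (h2 : ∀ k, (inner ℂ x (b k) : ℂ) = inner ℂ x' (b' k)) :
    (inner ℂ x y : ℂ) = inner ℂ x' y' := by
  rw [expand_right_aux hb hy, expand_right_aux hb' hy']
  exact Finset.sum_congr rfl fun k _ => by rw [h1 k, h2 k]

lemma step_l_aux {E : Type*} [NormedAddCommGroup E] [InnerProductSpace ℂ E] {m : ℕ}
    {b b' : Fin m → E} {x x' y y' : E} (hb : Orthonormal ℂ b) (hb' : Orthonormal ℂ b')
    (hx : x ∈ Submodule.span ℂ (Set.range b)) (hx' : x' ∈ Submodule.span ℂ (Set.range b'))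
    (h1 : ∀ k, (inner ℂ (b k) x : ℂ) = inner ℂ (b' k) x')
    (h2 : ∀ k, (inner ℂ (b k) y : ℂ) = inner ℂ (b' k) y') :
    (inner ℂ x y : ℂ) = inner ℂ x' y' := by
  rw [expand_left_aux hb hx, expand_left_aux hb' hx']
  exact Finset.sum_congr rfl fun k _ => by rw [h1 k, h2 k]


/-- Two triples `(V,W,U)` and `(V',W',U')` of `m`-dimensional subspaces of
`ℂ^n` whose pairwise principal angles agree and whose principal unitaries (overlap matrices
between the two induced principal bases in each subspace) agree are related by a unitary of
`ℂ^n` mapping `V, W, U` onto `V', W', U'` respectively. -/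
theorem stmt17 (n m : ℕ)
    (V W U V' W' U' : Submodule ℂ (EuclideanSpace ℂ (Fin n)))
    -- principal bases: two in each subspace, one per other subspace of the triple
    (vW vU wV wU uV uW vW' vU' wV' wU' uV' uW' : Fin m → EuclideanSpace ℂ (Fin n))
    -- common principal angles
    (θVW θVU θWU : Fin m → ℝ)
    (hθVW : ∀ i, θVW i ∈ Set.Icc (0 : ℝ) (Real.pi / 2))
    (hθVU : ∀ i, θVU i ∈ Set.Icc (0 : ℝ) (Real.pi / 2))
    (hθWU : ∀ i, θWU i ∈ Set.Icc (0 : ℝ) (Real.pi / 2))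
    -- orthonormality
    (hvW : Orthonormal ℂ vW) (hvU : Orthonormal ℂ vU)
    (hwV : Orthonormal ℂ wV) (hwU : Orthonormal ℂ wU)
    (huV : Orthonormal ℂ uV) (huW : Orthonormal ℂ uW)
    (hvW' : Orthonormal ℂ vW') (hvU' : Orthonormal ℂ vU')
    (hwV' : Orthonormal ℂ wV') (hwU' : Orthonormal ℂ wU')
    (huV' : Orthonormal ℂ uV') (huW' : Orthonormal ℂ uW')
    -- each family spans its subspace
    (hvWs : Submodule.span ℂ (Set.range vW) = V) (hvUs : Submodule.span ℂ (Set.range vU) = V)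
    (hwVs : Submodule.span ℂ (Set.range wV) = W) (hwUs : Submodule.span ℂ (Set.range wU) = W)
    (huVs : Submodule.span ℂ (Set.range uV) = U) (huWs : Submodule.span ℂ (Set.range uW) = U)
    (hvWs' : Submodule.span ℂ (Set.range vW') = V') (hvUs' : Submodule.span ℂ (Set.range vU') = V')
    (hwVs' : Submodule.span ℂ (Set.range wV') = W') (hwUs' : Submodule.span ℂ (Set.range wU') = W')
    (huVs' : Submodule.span ℂ (Set.range uV') = U') (huWs' : Submodule.span ℂ (Set.range uW') = U')
    -- principal conditions: identical principal angles for both triples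
    (hVW : ∀ i j, (inner ℂ (vW i) (wV j) : ℂ) = if i = j then (Real.cos (θVW i) : ℂ) else 0)
    (hVU : ∀ i j, (inner ℂ (vU i) (uV j) : ℂ) = if i = j then (Real.cos (θVU i) : ℂ) else 0)
    (hWU : ∀ i j, (inner ℂ (wU i) (uW j) : ℂ) = if i = j then (Real.cos (θWU i) : ℂ) else 0)
    (hVW' : ∀ i j, (inner ℂ (vW' i) (wV' j) : ℂ) = if i = j then (Real.cos (θVW i) : ℂ) else 0)
    (hVU' : ∀ i j, (inner ℂ (vU' i) (uV' j) : ℂ) = if i = j then (Real.cos (θVU i) : ℂ) else 0)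
    (hWU' : ∀ i j, (inner ℂ (wU' i) (uW' j) : ℂ) = if i = j then (Real.cos (θWU i) : ℂ) else 0)
    -- identical principal unitaries
    (hUniV : ∀ i k, (inner ℂ (vW i) (vU k) : ℂ) = inner ℂ (vW' i) (vU' k))
    (hUniW : ∀ i k, (inner ℂ (wV i) (wU k) : ℂ) = inner ℂ (wV' i) (wU' k))
    (hUniU : ∀ k j, (inner ℂ (uV k) (uW j) : ℂ) = inner ℂ (uV' k) (uW' j)) :
    ∃ U₀ : EuclideanSpace ℂ (Fin n) ≃ₗᵢ[ℂ] EuclideanSpace ℂ (Fin n),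
      Submodule.map (U₀.toLinearEquiv : EuclideanSpace ℂ (Fin n) →ₗ[ℂ] EuclideanSpace ℂ (Fin n)) V = V' ∧
      Submodule.map (U₀.toLinearEquiv : EuclideanSpace ℂ (Fin n) →ₗ[ℂ] EuclideanSpace ℂ (Fin n)) W = W' ∧
      Submodule.map (U₀.toLinearEquiv : EuclideanSpace ℂ (Fin n) →ₗ[ℂ] EuclideanSpace ℂ (Fin n)) U = U' := by
  classical
  have D1 : ∀ i j, (inner ℂ (vW i) (vW j) : ℂ) = inner ℂ (vW' i) (vW' j) := fun i j =>
    (orthonormal_iff_ite.mp hvW i j).trans (orthonormal_iff_ite.mp hvW' i j).symm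
  have D2 : ∀ i j, (inner ℂ (vU i) (vU j) : ℂ) = inner ℂ (vU' i) (vU' j) := fun i j =>
    (orthonormal_iff_ite.mp hvU i j).trans (orthonormal_iff_ite.mp hvU' i j).symm
  have D3 : ∀ i j, (inner ℂ (wV i) (wV j) : ℂ) = inner ℂ (wV' i) (wV' j) := fun i j =>
    (orthonormal_iff_ite.mp hwV i j).trans (orthonormal_iff_ite.mp hwV' i j).symm
  have D4 : ∀ i j, (inner ℂ (wU i) (wU j) : ℂ) = inner ℂ (wU' i) (wU' j) := fun i j =>
    (orthonormal_iff_ite.mp hwU i j).trans (orthonormal_iff_ite.mp hwU' i j).symm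
  have D5 : ∀ i j, (inner ℂ (uV i) (uV j) : ℂ) = inner ℂ (uV' i) (uV' j) := fun i j =>
    (orthonormal_iff_ite.mp huV i j).trans (orthonormal_iff_ite.mp huV' i j).symm
  have D6 : ∀ i j, (inner ℂ (uW i) (uW j) : ℂ) = inner ℂ (uW' i) (uW' j) := fun i j =>
    (orthonormal_iff_ite.mp huW i j).trans (orthonormal_iff_ite.mp huW' i j).symm
  have E1 : ∀ i j, (inner ℂ (vW i) (wV j) : ℂ) = inner ℂ (vW' i) (wV' j) := fun i j =>
    (hVW i j).trans (hVW' i j).symm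
  have E2 : ∀ i j, (inner ℂ (vU i) (uV j) : ℂ) = inner ℂ (vU' i) (uV' j) := fun i j =>
    (hVU i j).trans (hVU' i j).symm
  have E3 : ∀ i j, (inner ℂ (wU i) (uW j) : ℂ) = inner ℂ (wU' i) (uW' j) := fun i j =>
    (hWU i j).trans (hWU' i j).symm
  have E4 := hUniV
  have E5 := hUniW
  have E6 := hUniU
  have E7 : ∀ i j, (inner ℂ (vW i) (wU j) : ℂ) = inner ℂ (vW' i) (wU' j) := fun i j =>
    step_r_aux hwV hwV' (mem_span_of_span_eq_aux hwUs hwVs j)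
      (mem_span_of_span_eq_aux hwUs' hwVs' j) (fun k => E5 k j) (fun k => E1 i k)
  have E8 : ∀ i j, (inner ℂ (vW i) (uV j) : ℂ) = inner ℂ (vW' i) (uV' j) := fun i j =>
    step_l_aux hvU hvU' (mem_span_of_span_eq_aux hvWs hvUs i)
      (mem_span_of_span_eq_aux hvWs' hvUs' i)
      (fun k => inner_swap_eq_aux (E4 i k)) (fun k => E2 k j)
  have E9 : ∀ i j, (inner ℂ (vW i) (uW j) : ℂ) = inner ℂ (vW' i) (uW' j) := fun i j =>
    step_r_aux huV huV' (mem_span_of_span_eq_aux huWs huVs j)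
      (mem_span_of_span_eq_aux huWs' huVs' j) (fun k => E6 k j) (fun k => E8 i k)
  have E10 : ∀ i j, (inner ℂ (vU i) (wV j) : ℂ) = inner ℂ (vU' i) (wV' j) := fun i j =>
    step_l_aux hvW hvW' (mem_span_of_span_eq_aux hvUs hvWs i)
      (mem_span_of_span_eq_aux hvUs' hvWs' i) (fun k => E4 k i) (fun k => E1 k j)
  have E11 : ∀ i j, (inner ℂ (vU i) (wU j) : ℂ) = inner ℂ (vU' i) (wU' j) := fun i j =>
    step_r_aux hwV hwV' (mem_span_of_span_eq_aux hwUs hwVs j)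
      (mem_span_of_span_eq_aux hwUs' hwVs' j) (fun k => E5 k j) (fun k => E10 i k)
  have E12 : ∀ i j, (inner ℂ (vU i) (uW j) : ℂ) = inner ℂ (vU' i) (uW' j) := fun i j =>
    step_r_aux huV huV' (mem_span_of_span_eq_aux huWs huVs j)
      (mem_span_of_span_eq_aux huWs' huVs' j) (fun k => E6 k j) (fun k => E2 i k)
  have E14 : ∀ i j, (inner ℂ (wU i) (uV j) : ℂ) = inner ℂ (wU' i) (uV' j) := fun i j =>
    step_r_aux huW huW' (mem_span_of_span_eq_aux huVs huWs j)
      (mem_span_of_span_eq_aux huVs' huWs' j)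
      (fun k => inner_swap_eq_aux (E6 j k)) (fun k => E3 i k)
  have E13 : ∀ i j, (inner ℂ (wV i) (uV j) : ℂ) = inner ℂ (wV' i) (uV' j) := fun i j =>
    step_l_aux hwU hwU' (mem_span_of_span_eq_aux hwVs hwUs i)
      (mem_span_of_span_eq_aux hwVs' hwUs' i)
      (fun k => inner_swap_eq_aux (E5 i k)) (fun k => E14 k j)
  have E15 : ∀ i j, (inner ℂ (wV i) (uW j) : ℂ) = inner ℂ (wV' i) (uW' j) := fun i j =>
    step_l_aux hwU hwU' (mem_span_of_span_eq_aux hwVs hwUs i)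
      (mem_span_of_span_eq_aux hwVs' hwUs' i)
      (fun k => inner_swap_eq_aux (E5 i k)) (fun k => E3 k j)
  -- combined families over a sum index type
  let ι := Fin m ⊕ (Fin m ⊕ (Fin m ⊕ (Fin m ⊕ (Fin m ⊕ Fin m))))
  let f : ι → EuclideanSpace ℂ (Fin n) :=
    Sum.elim vW (Sum.elim vU (Sum.elim wV (Sum.elim wU (Sum.elim uV uW))))
  let g : ι → EuclideanSpace ℂ (Fin n) :=
    Sum.elim vW' (Sum.elim vU' (Sum.elim wV' (Sum.elim wU' (Sum.elim uV' uW'))))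
  have hgram : ∀ p q, (inner ℂ (f p) (f q) : ℂ) = inner ℂ (g p) (g q) := by
    rintro (i | i | i | i | i | i) (j | j | j | j | j | j)
    · exact D1 i j
    · exact E4 i j
    · exact E1 i j
    · exact E7 i j
    · exact E8 i j
    · exact E9 i j
    · exact inner_swap_eq_aux (E4 j i)
    · exact D2 i j
    · exact E10 i j
    · exact E11 i j
    · exact E2 i j
    · exact E12 i j
    · exact inner_swap_eq_aux (E1 j i)
    · exact inner_swap_eq_aux (E10 j i)
    · exact D3 i j
    · exact E5 i j
    · exact E13 i j
    · exact E15 i j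
    · exact inner_swap_eq_aux (E7 j i)
    · exact inner_swap_eq_aux (E11 j i)
    · exact inner_swap_eq_aux (E5 j i)
    · exact D4 i j
    · exact E14 i j
    · exact E3 i j
    · exact inner_swap_eq_aux (E8 j i)
    · exact inner_swap_eq_aux (E2 j i)
    · exact inner_swap_eq_aux (E13 j i)
    · exact inner_swap_eq_aux (E14 j i)
    · exact D5 i j
    · exact E6 i j
    · exact inner_swap_eq_aux (E9 j i)
    · exact inner_swap_eq_aux (E12 j i)
    · exact inner_swap_eq_aux (E15 j i)
    · exact inner_swap_eq_aux (E3 j i)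
    · exact inner_swap_eq_aux (E6 j i)
    · exact D6 i j
  obtain ⟨T, hT⟩ := exists_isometry_of_gram_eq f g hgram
  have himg : ∀ (h h' : Fin m → EuclideanSpace ℂ (Fin n)), (∀ i, T (h i) = h' i) →
      Submodule.map (T.toLinearEquiv :
          EuclideanSpace ℂ (Fin n) →ₗ[ℂ] EuclideanSpace ℂ (Fin n))
        (Submodule.span ℂ (Set.range h)) = Submodule.span ℂ (Set.range h') := by
    intro h h' hh
    rw [Submodule.map_span, ← Set.range_comp]
    have : (⇑(T.toLinearEquiv :
        EuclideanSpace ℂ (Fin n) →ₗ[ℂ] EuclideanSpace ℂ (Fin n))) ∘ h = h' :=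
      funext fun i => hh i
    rw [this]
  refine ⟨T, ?_, ?_, ?_⟩
  · rw [← hvWs, ← hvWs']
    exact himg vW vW' fun i => hT (Sum.inl i)
  · rw [← hwVs, ← hwVs']
    exact himg wV wV' fun i => hT (Sum.inr (Sum.inr (Sum.inl i)))
  · rw [← huVs, ← huVs']
    exact himg uV uV' fun i => hT (Sum.inr (Sum.inr (Sum.inr (Sum.inr (Sum.inl i)))))
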